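/- Let X, Y be metric spaces, f: X → X, g: Y → Y, and equip X × Y with the maximum metric. Then for all δ > 0 and ν ∈ (0,1]: Span(f×g, δ, ν) ≤ Span(f, δ, ν/2) · Span(g, δ, ν/2). -/

import Mathlib

open Filter Metric Set

/-- `Sn f δ x y n` counts the times `0 ≤ k < n` with `dist (f^[k] x) (f^[k] y) ≥ δ`. -/
noncomputable def Sn {X : Type*} [PseudoMetricSpace X] (f : X → X) (δ : ℝ) (x y : X)
    (n : ℕ) : ℕ :=
  Set.ncard {k : ℕ | k < n ∧ δ ≤ dist (f^[k] x) (f^[k] y)}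

/-- asymptotic separation frequency `limsup_n S_n(f,δ,x,y)/n`. -/
noncomputable def sepFreq {X : Type*} [PseudoMetricSpace X] (f : X → X) (δ : ℝ) (x y : X) : ℝ :=
  Filter.limsup (fun n : ℕ => (Sn f δ x y n : ℝ) / n) Filter.atTop

/-- A set is `(f,δ,ν)`-separated if all pairs of distinct points are `(f,δ,ν)`-separated. -/
def IsSeparatedSet {X : Type*} [PseudoMetricSpace X] (f : X → X) (δ ν : ℝ) (S : Set X) : Prop :=
  ∀ x ∈ S, ∀ y ∈ S, x ≠ y → ν ≤ sepFreq f δ x y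

/-- A set is `(f,δ,ν)`-spanning if every point has a companion in it with separation
frequency `< ν`. -/
def IsSpanningSet {X : Type*} [PseudoMetricSpace X] (f : X → X) (δ ν : ℝ) (S : Set X) : Prop :=
  ∀ x : X, ∃ y ∈ S, sepFreq f δ x y < ν

/-- `SepNum f δ ν`: supremal cardinality of an `(f,δ,ν)`-separated set. -/
noncomputable def SepNum {X : Type*} [PseudoMetricSpace X] (f : X → X) (δ ν : ℝ) : ℕ∞ :=
  ⨆ (S : Set X) (_ : IsSeparatedSet f δ ν S), S.encard

/-- `SpanNum f δ ν`: minimal cardinality of an `(f,δ,ν)`-spanning set. -/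
noncomputable def SpanNum {X : Type*} [PseudoMetricSpace X] (f : X → X) (δ ν : ℝ) : ℕ∞ :=
  ⨅ (S : Set X) (_ : IsSpanningSet f δ ν S), S.encard

/-! ### Auxiliary lemmas -/

lemma Sn_le_self {X : Type*} [PseudoMetricSpace X] (f : X → X) (δ : ℝ) (x y : X) (n : ℕ) :
    Sn f δ x y n ≤ n := by
  have h : {k : ℕ | k < n ∧ δ ≤ dist (f^[k] x) (f^[k] y)} ⊆ Set.Iio n :=
    fun k hk => hk.1
  calc Sn f δ x y n ≤ (Set.Iio n).ncard := Set.ncard_le_ncard h (Set.finite_Iio n)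
    _ = n := by rw [← Finset.coe_Iio, Set.ncard_coe_finset, Nat.card_Iio]

lemma snDiv_nonneg {X : Type*} [PseudoMetricSpace X] (f : X → X) (δ : ℝ) (x y : X) (n : ℕ) :
    (0 : ℝ) ≤ (Sn f δ x y n : ℝ) / n := by positivity

lemma snDiv_le_one {X : Type*} [PseudoMetricSpace X] (f : X → X) (δ : ℝ) (x y : X) (n : ℕ) :
    (Sn f δ x y n : ℝ) / n ≤ 1 := by
  rcases Nat.eq_zero_or_pos n with h | h
  · simp [h]
  · rw [div_le_one (by exact_mod_cast h)]
    exact_mod_cast Sn_le_self f δ x y n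

lemma sepFreq_bddBelow {X : Type*} [PseudoMetricSpace X] (f : X → X) (δ : ℝ) (x y : X) :
    IsBoundedUnder (fun a b : ℝ => a ≥ b) atTop (fun n : ℕ => (Sn f δ x y n : ℝ) / n) :=
  isBoundedUnder_of ⟨0, fun n => snDiv_nonneg f δ x y n⟩

lemma sepFreq_bddAbove {X : Type*} [PseudoMetricSpace X] (f : X → X) (δ : ℝ) (x y : X) :
    IsBoundedUnder (fun a b : ℝ => a ≤ b) atTop (fun n : ℕ => (Sn f δ x y n : ℝ) / n) :=
  isBoundedUnder_of ⟨1, fun n => snDiv_le_one f δ x y n⟩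

lemma sepFreq_self {X : Type*} [PseudoMetricSpace X] (f : X → X) {δ : ℝ} (hδ : 0 < δ) (x : X) :
    sepFreq f δ x x = 0 := by
  have h : ∀ n, Sn f δ x x n = 0 := by
    intro n
    have : {k : ℕ | k < n ∧ δ ≤ dist (f^[k] x) (f^[k] x)} = ∅ := by
      ext k
      simp only [Set.mem_setOf_eq, Set.mem_empty_iff_false, iff_false, not_and, not_le]
      intro _
      simpa using hδ
    unfold Sn
    rw [this, Set.ncard_empty]
  unfold sepFreq
  simp only [h, Nat.cast_zero, zero_div]
  exact limsup_const 0

lemma univ_isSpanningSet {X : Type*} [PseudoMetricSpace X] (f : X → X) {δ ν : ℝ}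
    (hδ : 0 < δ) (hν : 0 < ν) : IsSpanningSet f δ ν (Set.univ : Set X) :=
  fun x => ⟨x, Set.mem_univ x, by rw [sepFreq_self f hδ x]; exact hν⟩

lemma exists_spanNum {X : Type*} [PseudoMetricSpace X] (f : X → X) {δ ν : ℝ}
    (hδ : 0 < δ) (hν : 0 < ν) :
    ∃ S : Set X, IsSpanningSet f δ ν S ∧ S.encard = SpanNum f δ ν := by
  have hne : Nonempty {S : Set X // IsSpanningSet f δ ν S} :=
    ⟨⟨Set.univ, univ_isSpanningSet f hδ hν⟩⟩
  have h : SpanNum f δ ν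
      = ⨅ (S : {S : Set X // IsSpanningSet f δ ν S}), (S : Set X).encard :=
    iInf_subtype'
  obtain ⟨S, hS⟩ := ciInf_mem (fun S : {S : Set X // IsSpanningSet f δ ν S} =>
    (S : Set X).encard)
  exact ⟨S, S.2, by rw [h, ← hS]⟩

lemma encard_prod {X : Type*} {Y : Type*} (s : Set X) (t : Set Y) :
    (s ×ˢ t).encard = s.encard * t.encard := by
  simp only [Set.encard, ENat.card]
  rw [Cardinal.mk_congr (Equiv.Set.prod s t), Cardinal.mk_prod, map_mul,
    Cardinal.toENat_lift, Cardinal.toENat_lift]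

lemma Sn_prod_le {X Y : Type*} [PseudoMetricSpace X] [PseudoMetricSpace Y]
    (f : X → X) (g : Y → Y) (δ : ℝ) (p q : X × Y) (n : ℕ) :
    Sn (Prod.map f g) δ p q n ≤ Sn f δ p.1 q.1 n + Sn g δ p.2 q.2 n := by
  unfold Sn
  refine le_trans (le_trans (Set.ncard_le_ncard ?_ ?_) (Set.ncard_union_le _ _)) le_rfl
  · intro k hk
    obtain ⟨hkn, hd⟩ := hk
    rw [Prod.map_iterate] at hd
    rw [Prod.dist_eq] at hd
    rcases le_max_iff.mp (le_trans hd le_rfl) with h | h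
    · exact Or.inl ⟨hkn, h⟩
    · exact Or.inr ⟨hkn, h⟩
  · exact (((Set.finite_Iio n).subset (fun k hk => hk.1)).union
      ((Set.finite_Iio n).subset (fun k hk => hk.1)))

lemma sepFreq_prod_le {X Y : Type*} [PseudoMetricSpace X] [PseudoMetricSpace Y]
    (f : X → X) (g : Y → Y) (δ : ℝ) (p q : X × Y) :
    sepFreq (Prod.map f g) δ p q ≤ sepFreq f δ p.1 q.1 + sepFreq g δ p.2 q.2 := by
  set u : ℕ → ℝ := fun n => (Sn (Prod.map f g) δ p q n : ℝ) / n with hu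
  set v : ℕ → ℝ := fun n => (Sn f δ p.1 q.1 n : ℝ) / n with hv
  set w : ℕ → ℝ := fun n => (Sn g δ p.2 q.2 n : ℝ) / n with hw
  have hle : u ≤ᶠ[atTop] (v + w) := by
    refine Eventually.of_forall fun n => ?_
    rcases Nat.eq_zero_or_pos n with h | h
    · simp [hu, hv, hw, h]
    · have hn : (0 : ℝ) < n := by exact_mod_cast h
      simp only [hu, hv, hw, Pi.add_apply, ← add_div]
      apply div_le_div_of_nonneg_right ?_ hn.le |>.trans le_rfl
      exact_mod_cast Sn_prod_le f g δ p q n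
  have h1 : sepFreq (Prod.map f g) δ p q ≤ limsup (v + w) atTop := by
    refine limsup_le_limsup hle ?_ ?_
    · exact (sepFreq_bddBelow (Prod.map f g) δ p q).isCoboundedUnder_le
    · exact isBoundedUnder_le_add (sepFreq_bddAbove f δ p.1 q.1)
        (sepFreq_bddAbove g δ p.2 q.2)
  refine h1.trans ?_
  exact limsup_add_le (sepFreq_bddBelow f δ p.1 q.1) (sepFreq_bddAbove f δ p.1 q.1)
    ((sepFreq_bddBelow g δ p.2 q.2).isCoboundedUnder_le) (sepFreq_bddAbove g δ p.2 q.2)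

/-- `Span(f×g,δ,ν) ≤ Span(f,δ,ν/2) · Span(g,δ,ν/2)`, where `X × Y`
carries the maximum metric. -/
theorem spanNum_prod_le {X Y : Type*} [MetricSpace X] [MetricSpace Y]
    (f : X → X) (g : Y → Y) (δ ν : ℝ) (hδ : 0 < δ) (hν : ν ∈ Set.Ioc (0 : ℝ) 1) :
    SpanNum (Prod.map f g) δ ν ≤ SpanNum f δ (ν / 2) * SpanNum g δ (ν / 2) := by
  have hν2 : (0 : ℝ) < ν / 2 := by linarith [hν.1]
  obtain ⟨S, hS, hScard⟩ := exists_spanNum f hδ hν2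
  obtain ⟨T, hT, hTcard⟩ := exists_spanNum g hδ hν2
  have hspan : IsSpanningSet (Prod.map f g) δ ν (S ×ˢ T) := by
    rintro ⟨x, y⟩
    obtain ⟨a, haS, ha⟩ := hS x
    obtain ⟨b, hbT, hb⟩ := hT y
    refine ⟨(a, b), Set.mk_mem_prod haS hbT, ?_⟩
    calc sepFreq (Prod.map f g) δ (x, y) (a, b)
        ≤ sepFreq f δ x a + sepFreq g δ y b := sepFreq_prod_le f g δ (x, y) (a, b)
      _ < ν / 2 + ν / 2 := add_lt_add ha hb
      _ = ν := by ring
  calc SpanNum (Prod.map f g) δ ν ≤ (S ×ˢ T).encard := by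
        refine le_trans (iInf_le _ (S ×ˢ T)) ?_
        exact iInf_le _ hspan
    _ = S.encard * T.encard := encard_prod S T
    _ = SpanNum f δ (ν / 2) * SpanNum g δ (ν / 2) := by rw [hScard, hTcard]
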